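/- Let δ be a submodular function on the finite subsets of a set M (i.e., δ(X ∪ Y) + δ(X ∩ Y) ≤ δ(X) + δ(Y)), and define δ(X/B) = δ(X ∪ B) - δ(B) for finite B ⊆ M. Write B ≤ A (B is strong in A) if B ⊆ A and δ(X/B) ≥ 0 for every finite X with B ⊆ X ⊆ A. Then the relation ≤ is transitive: if A ≤ B and B ≤ C then A ≤ C. -/
import Mathlib


/-- For a submodular predimension `δ` on finite subsets of `M`, the strong-substructure
relation `B ≤ A` (i.e. `B ⊆ A` and `δ(X/B) ≥ 0` for all finite `B ⊆ X ⊆ A`) is transitive. -/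
theorem stmt_2 {M : Type*} [DecidableEq M] (δ : Finset M → ℤ)
    (hsub : ∀ X Y : Finset M, δ (X ∪ Y) + δ (X ∩ Y) ≤ δ X + δ Y)
    (strong : Finset M → Finset M → Prop)
    (hstrong : ∀ A B : Finset M,
      strong A B ↔ A ⊆ B ∧ ∀ X : Finset M, A ⊆ X → X ⊆ B → 0 ≤ δ (X ∪ A) - δ A)
    (A B C : Finset M) (hAB : strong A B) (hBC : strong B C) :
    strong A C := by
  rw [hstrong] at *
  obtain ⟨hABs, hABd⟩ := hAB
  obtain ⟨hBCs, hBCd⟩ := hBC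
  refine ⟨hABs.trans hBCs, fun X hAX hXC => ?_⟩
  have hXA : X ∪ A = X := Finset.union_eq_left.mpr hAX
  rw [hXA]
  -- δ(X∩B) ≥ δ(A)
  have h1 := hABd (X ∩ B) (Finset.subset_inter hAX hABs) (Finset.inter_subset_right)
  rw [Finset.union_eq_left.mpr ((Finset.subset_inter hAX hABs))] at h1
  -- δ(X∪B) ≥ δ(B)
  have h2 := hBCd (X ∪ B) Finset.subset_union_right (Finset.union_subset hXC hBCs)
  rw [Finset.union_assoc, Finset.union_self] at h2
  have h3 := hsub X B
  omega
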